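/- Let H be a real Hilbert space, ρ ∈ (0,+∞], and let S ⊆ H be a nonempty closed ρ-uniformly prox-regular set. Let x ∈ H with d_S(x) < ρ and let p ∈ S satisfy ‖x − p‖ = d_S(x). Let (xₙ) ⊆ H converge to x, let (εₙ) and (ηₙ) be sequences of positive numbers converging to 0, and for each n let zₙ ∈ proj_S^{εₙ,ηₙ}(xₙ) (with respect to closed sets S_{ηₙ} satisfying S ⊆ S_{ηₙ} ⊆ S + ηₙ𝔹). Then zₙ → p strongly in H. -/

import Mathlib

open Metric Set Filter
open scoped Pointwise RealInnerProductSpace Topology ENNReal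

variable {H : Type*} [NormedAddCommGroup H] [InnerProductSpace ℝ H]

/-- The set of ε-η approximate projections of `x` onto `S`, relative to `Sη`. -/
noncomputable def approxProjEta (S Sη : Set H) (ε : ℝ) (x : H) : Set H :=
  {z | z ∈ Sη ∧ ‖x - z‖ ^ 2 < infDist x S ^ 2 + ε}

/-- The proximal normal cone of `S` at `x`: the set of `ζ` such that there are `σ ≥ 0` and
`δ > 0` with `⟪ζ, y−x⟫ ≤ σ‖y−x‖²` for all `y ∈ S` with `‖y−x‖ < δ`. -/
noncomputable def proxNormalCone (S : Set H) (x : H) : Set H :=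
  {ζ | ∃ σ : ℝ, 0 ≤ σ ∧ ∃ δ : ℝ, 0 < δ ∧ ∀ y ∈ S, ‖y - x‖ < δ →
    ⟪ζ, y - x⟫ ≤ σ * ‖y - x‖ ^ 2}

/-- `ρ`-uniform prox-regularity for `ρ ∈ (0, +∞]` (`ρ : ℝ≥0∞`): for all `x ∈ S` and
`ζ ∈ N^P(S;x)`, `⟪ζ, x'−x⟫ ≤ (‖ζ‖/(2ρ))‖x'−x‖²` for all `x' ∈ S` (where `‖ζ‖/(2ρ) = 0`
when `ρ = ∞`). -/
def UniformProxRegularE (ρ : ℝ≥0∞) (S : Set H) : Prop :=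
  ∀ x ∈ S, ∀ ζ ∈ proxNormalCone S x, ∀ x' ∈ S,
    ⟪ζ, x' - x⟫ ≤ (ENNReal.ofReal ‖ζ‖ / (2 * ρ)).toReal * ‖x' - x‖ ^ 2

/-- If `S` is `ρ`-uniformly prox-regular, `d_S(x) < ρ`, `p` is the projection
of `x` onto `S`, `xₙ → x`, `εₙ, ηₙ → 0` and `zₙ ∈ proj_S^{εₙ,ηₙ}(xₙ)`, then `zₙ → p`. -/
theorem approxProjEta_tendsto_proj (ρ : ℝ≥0∞) (hρ : 0 < ρ)
    (S : Set H) (hS : S.Nonempty) (hScl : IsClosed S)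
    (hprox : UniformProxRegularE ρ S)
    (x : H) (hx : ENNReal.ofReal (infDist x S) < ρ)
    (p : H) (hp : p ∈ S) (hpd : ‖x - p‖ = infDist x S)
    (xn : ℕ → H) (hxn : Tendsto xn atTop (𝓝 x))
    (εn ηn : ℕ → ℝ) (hεn : ∀ n, 0 < εn n) (hηn : ∀ n, 0 < ηn n)
    (hεn0 : Tendsto εn atTop (𝓝 0)) (hηn0 : Tendsto ηn atTop (𝓝 0))
    (Sη : ℕ → Set H) (hSηcl : ∀ n, IsClosed (Sη n))
    (hsub1 : ∀ n, S ⊆ Sη n) (hsub2 : ∀ n, Sη n ⊆ S + ηn n • closedBall (0 : H) 1)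
    (zn : ℕ → H) (hzn : ∀ n, zn n ∈ approxProjEta S (Sη n) (εn n) (xn n)) :
    Tendsto zn atTop (𝓝 p) := by
  set d := infDist x S with hd
  have hd0 : 0 ≤ d := infDist_nonneg
  -- choose points of S close to zn n
  have key : ∀ n, ∃ w ∈ S, ‖zn n - w‖ ≤ ηn n := by
    intro n
    obtain ⟨a, ha, b, hb, hab⟩ := hsub2 n (hzn n).1
    obtain ⟨c, hc, rfl⟩ := hb
    refine ⟨a, ha, ?_⟩
    have hc1 : ‖c‖ ≤ 1 := by simpa using hc
    have hab' : a + ηn n • c = zn n := hab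
    have hzw : zn n - a = ηn n • c := sub_eq_of_eq_add' hab'.symm
    rw [hzw, norm_smul, Real.norm_eq_abs, abs_of_pos (hηn n)]
    calc ηn n * ‖c‖ ≤ ηn n * 1 := by
          exact mul_le_mul_of_nonneg_left hc1 (hηn n).le
      _ = ηn n := mul_one _
  choose w hwS hwb using key
  -- x - p is a proximal normal at p
  have hζ : (x - p) ∈ proxNormalCone S p := by
    refine ⟨1/2, by norm_num, 1, one_pos, ?_⟩
    intro y hy _
    have h1 : d ≤ ‖x - y‖ := by
      simpa [dist_eq_norm] using infDist_le_dist_of_mem hy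
    have hexp : ‖x - y‖ ^ 2 = ‖x - p‖ ^ 2 - 2 * ⟪x - p, y - p⟫ + ‖y - p‖ ^ 2 := by
      have hxy : x - y = (x - p) - (y - p) := by abel
      rw [hxy, norm_sub_sq_real]
    nlinarith [norm_nonneg (x - y), hpd]
  set κ := (ENNReal.ofReal ‖x - p‖ / (2 * ρ)).toReal with hκ
  have hκ0 : 0 ≤ κ := ENNReal.toReal_nonneg
  have hκlt : 2 * κ < 1 := by
    by_cases hρtop : ρ = ⊤
    · have : κ = 0 := by
        simp [hκ, hρtop, ENNReal.mul_top]
      rw [this]; norm_num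
    · have hρt : 0 < ρ.toReal := ENNReal.toReal_pos hρ.ne' hρtop
      have hdlt : d < ρ.toReal := by
        rw [← ENNReal.ofReal_lt_iff_lt_toReal hd0 hρtop]
        exact hx
      have hκeq : κ = ‖x - p‖ / (2 * ρ.toReal) := by
        rw [hκ, ENNReal.toReal_div, ENNReal.toReal_mul,
          ENNReal.toReal_ofReal (norm_nonneg _)]
        norm_num
      rw [hκeq, hpd]
      rw [mul_div_assoc']
      rw [div_lt_one (by positivity)]
      linarith
  have hc : 0 < 1 - 2 * κ := by linarith
  -- key inequality from prox-regularity
  have hprec : ∀ n, (1 - 2 * κ) * ‖w n - p‖ ^ 2 ≤ ‖x - w n‖ ^ 2 - d ^ 2 := by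
    intro n
    have hip := hprox p hp (x - p) hζ (w n) (hwS n)
    have hexp : ‖x - w n‖ ^ 2 = ‖x - p‖ ^ 2 - 2 * ⟪x - p, w n - p⟫ + ‖w n - p‖ ^ 2 := by
      have hxy : x - w n = (x - p) - (w n - p) := by abel
      rw [hxy, norm_sub_sq_real]
    rw [← hκ] at hip
    nlinarith [hpd]
  -- upper bound on ‖x - w n‖
  set δ : ℕ → ℝ := fun n => dist (xn n) x with hδ
  set B : ℕ → ℝ := fun n => δ n + Real.sqrt ((d + δ n) ^ 2 + εn n) + ηn n with hB
  have hδ0 : Tendsto δ atTop (𝓝 0) := tendsto_iff_dist_tendsto_zero.mp hxn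
  have hBlim : Tendsto B atTop (𝓝 d) := by
    have hone : Tendsto (fun n => d + δ n) atTop (𝓝 (d + 0)) :=
      tendsto_const_nhds.add hδ0
    have h1 : Tendsto (fun n => (d + δ n) ^ 2 + εn n) atTop (𝓝 (d ^ 2)) := by
      have := (hone.pow 2).add hεn0
      simpa using this
    have h2 : Tendsto (fun n => Real.sqrt ((d + δ n) ^ 2 + εn n)) atTop (𝓝 d) := by
      have := (Real.continuous_sqrt.tendsto (d ^ 2)).comp h1
      simpa [Real.sqrt_sq hd0, Function.comp_def] using this
    have := (hδ0.add h2).add hηn0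
    simpa using this
  have huB : ∀ n, ‖x - w n‖ ≤ B n := by
    intro n
    have h1 : ‖xn n - zn n‖ ≤ Real.sqrt ((d + δ n) ^ 2 + εn n) := by
      have h2 := (hzn n).2
      have h3 : infDist (xn n) S ≤ d + δ n := by
        calc infDist (xn n) S ≤ infDist x S + dist (xn n) x :=
              infDist_le_infDist_add_dist
          _ = d + δ n := rfl
      have h4 : ‖xn n - zn n‖ ^ 2 ≤ (d + δ n) ^ 2 + εn n := by
        nlinarith [infDist_nonneg (x := xn n) (s := S)]
      exact Real.le_sqrt_of_sq_le h4
    calc ‖x - w n‖ ≤ ‖x - xn n‖ + ‖xn n - zn n‖ + ‖zn n - w n‖ := by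
          have hsum : x - w n = (x - xn n) + (xn n - zn n) + (zn n - w n) := by abel
          rw [hsum]
          exact norm_add₃_le
      _ ≤ δ n + Real.sqrt ((d + δ n) ^ 2 + εn n) + ηn n := by
          have hxx : ‖x - xn n‖ = δ n := by simp [hδ, dist_eq_norm, norm_sub_rev]
          rw [hxx]
          exact add_le_add (add_le_add le_rfl h1) (hwb n)
  -- squeeze
  have hbound : ∀ n, ‖zn n - p‖ ≤ ηn n + Real.sqrt ((B n ^ 2 - d ^ 2) / (1 - 2 * κ)) := by
    intro n
    have h1 : d ≤ ‖x - w n‖ := by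
      simpa [dist_eq_norm] using infDist_le_dist_of_mem (hwS n)
    have h2 := hprec n
    have h3 : ‖x - w n‖ ^ 2 ≤ B n ^ 2 := by
      nlinarith [huB n, norm_nonneg (x - w n)]
    have h4 : ‖w n - p‖ ^ 2 ≤ (B n ^ 2 - d ^ 2) / (1 - 2 * κ) := by
      rw [le_div_iff₀ hc]; nlinarith
    have h5 : ‖w n - p‖ ≤ Real.sqrt ((B n ^ 2 - d ^ 2) / (1 - 2 * κ)) := by
      exact Real.le_sqrt_of_sq_le h4
    calc ‖zn n - p‖ = ‖(zn n - w n) + (w n - p)‖ := by rw [sub_add_sub_cancel]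
      _ ≤ ‖zn n - w n‖ + ‖w n - p‖ := norm_add_le _ _
      _ ≤ ηn n + Real.sqrt ((B n ^ 2 - d ^ 2) / (1 - 2 * κ)) :=
          add_le_add (hwb n) h5
  have hM : Tendsto (fun n => ηn n + Real.sqrt ((B n ^ 2 - d ^ 2) / (1 - 2 * κ)))
      atTop (𝓝 0) := by
    have h1 : Tendsto (fun n => (B n ^ 2 - d ^ 2) / (1 - 2 * κ)) atTop (𝓝 0) := by
      have hcst : Tendsto (fun _ : ℕ => d ^ 2) atTop (𝓝 (d ^ 2)) := tendsto_const_nhds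
      have := ((hBlim.pow 2).sub hcst).div_const (1 - 2 * κ)
      simpa using this
    have h2 : Tendsto (fun n => Real.sqrt ((B n ^ 2 - d ^ 2) / (1 - 2 * κ))) atTop (𝓝 0) := by
      have := (Real.continuous_sqrt.tendsto 0).comp h1
      simpa [Real.sqrt_zero, Function.comp_def] using this
    simpa using hηn0.add h2
  rw [tendsto_iff_norm_sub_tendsto_zero]
  exact squeeze_zero (fun n => norm_nonneg _) hbound hM
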